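/- Let S be a finite subset of positive real numbers (or a commutative cancellative monoid written multiplicatively) with |S·S| ≤ K·|S|. Then |S^m| ≤ K^m·|S| for every m ≥ 1, where S^m is the set of m-fold products of elements of S. -/

import Mathlib

open Finset
open scoped Pointwise

section Aux

variable {G : Type*} [CancelCommMonoid G]

private instance grothInv : Inv (Localization (⊤ : Submonoid G)) :=
  ⟨fun x => Localization.liftOn x (fun a b => Localization.mk (b : G) ⟨a, Submonoid.mem_top a⟩)
    (fun {a c} {b d} h => by
      rw [Localization.r_iff_exists] at h
      obtain ⟨e, he⟩ := h
      rw [Localization.mk_eq_mk_iff, Localization.r_iff_exists]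
      refine ⟨e, ?_⟩
      push_cast at he ⊢
      calc (e : G) * (c * b) = e * (b * c) := by rw [mul_comm c (b : G)]
        _ = e * (d * a) := he.symm
        _ = e * (a * d) := by rw [mul_comm (d : G) a])⟩

private instance grothGroup : CommGroup (Localization (⊤ : Submonoid G)) :=
  { (inferInstance : CommMonoid (Localization (⊤ : Submonoid G))),
    (inferInstance : Inv (Localization (⊤ : Submonoid G))) with
    inv_mul_cancel := fun x => by
      induction x using Localization.ind with
      | _ p =>
        obtain ⟨a, b⟩ := p
        show Localization.mk (b : G) ⟨a, Submonoid.mem_top a⟩ * Localization.mk a b = 1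
        rw [Localization.mk_mul, ← Localization.mk_self (⟨(b : G) * a, Submonoid.mem_top _⟩ : (⊤ : Submonoid G))]
        congr 1
        exact Subtype.ext (by simp [mul_comm]) }

private def grothHom : G →* Localization (⊤ : Submonoid G) :=
  (Localization.monoidOf (⊤ : Submonoid G)).toMonoidHom

private lemma grothHom_injective : Function.Injective (grothHom (G := G)) := by
  intro a b h
  have : Localization.mk a (1 : (⊤ : Submonoid G)) = Localization.mk b 1 := by
    simpa [Localization.mk_one_eq_monoidOf_mk, grothHom] using h
  exact Localization.mk_left_injective _ this

end Aux

/-- Multiplicative Plünnecke–Ruzsa inequality: if `S` is a finite nonempty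
subset of a commutative cancellative monoid with `|S·S| ≤ K·|S|`, then
`|S^m| ≤ K^m·|S|` for every `m ≥ 1`. -/
theorem pluennecke_ruzsa_mul {G : Type*} [CancelCommMonoid G] [DecidableEq G]
    (S : Finset G) (hS : S.Nonempty) (K : ℝ)
    (hK : ((S * S).card : ℝ) ≤ K * S.card) (m : ℕ) (hm : 1 ≤ m) :
    ((S ^ m).card : ℝ) ≤ K ^ m * S.card := by
  classical
  set φ := grothHom (G := G)
  set T : Finset (Localization (⊤ : Submonoid G)) := S.image φ with hT
  have hinj := grothHom_injective (G := G)
  have hTcard : T.card = S.card := card_image_of_injective _ hinj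
  have hTm : ∀ n : ℕ, (S ^ n).image φ = T ^ n := fun n => Finset.image_pow φ S n
  have hT2 : (S * S).image φ = T * T := Finset.image_mul φ
  have hTne : T.Nonempty := hS.image _
  have key := Finset.pluennecke_ruzsa_inequality_pow_mul hTne T m
  -- key : #(T ^ m) ≤ (#(T * T) / #T : ℚ≥0) ^ m * #T
  have hScard_pos : (0 : ℝ) < S.card := by exact_mod_cast hS.card_pos
  have hKpos : 0 < K := by
    have h1 : (0 : ℝ) < (S * S).card := by
      exact_mod_cast (hS.mul hS).card_pos
    nlinarith
  have hcards : ((T * T).card : ℝ) = ((S * S).card : ℝ) := by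
    rw [← hT2, card_image_of_injective _ hinj]
  have hcardsm : ((T ^ m).card : ℝ) = ((S ^ m).card : ℝ) := by
    rw [← hTm, card_image_of_injective _ hinj]
  have keyR : ((T ^ m).card : ℝ) ≤ (((T * T).card : ℝ) / T.card) ^ m * T.card := by
    have := (NNRat.cast_le (K := ℝ)).2 key
    push_cast at this
    exact_mod_cast this
  have hdiv : (((T * T).card : ℝ) / T.card) ≤ K := by
    rw [div_le_iff₀ (by rw [hTcard]; exact hScard_pos)]
    rw [hcards, hTcard]
    exact hK
  calc ((S ^ m).card : ℝ) = ((T ^ m).card : ℝ) := hcardsm.symm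
    _ ≤ (((T * T).card : ℝ) / T.card) ^ m * T.card := keyR
    _ ≤ K ^ m * T.card := by
        have hp : (((T * T).card : ℝ) / T.card) ^ m ≤ K ^ m :=
          pow_le_pow_left₀ (by positivity) hdiv m
        exact mul_le_mul_of_nonneg_right hp (Nat.cast_nonneg _)
    _ = K ^ m * S.card := by rw [hTcard]
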